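/- Let G be a connected 3-regular graph with cutwidth r+1. Then the XOR constraint system φ(G, f, g), where f and g have different parity, cannot be refuted by width-r resolution: the empty set does not derive the contradiction ∅ ~⁻ ∅ using only intermediate XOR constraints on at most r variables. -/

import Mathlib

open SimpleGraph

noncomputable def cutCount {V : Type*} (G : SimpleGraph V) (S : Set V) : ℕ :=
  {p : V × V | p.1 ∈ S ∧ p.2 ∉ S ∧ G.Adj p.1 p.2}.ncard

noncomputable def cutwidth {V : Type*} [Fintype V] (G : SimpleGraph V) : ℕ :=
  sInf { w | ∃ π : Fin (Fintype.card V) ≃ V,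
    ∀ i : Fin (Fintype.card V), cutCount G (π '' {j | j ≤ i}) ≤ w }

def EvenParity {V : Type*} [Fintype V] [DecidableEq V] (G : SimpleGraph V)
    [DecidableRel G.Adj] (f : Sym2 V → Bool) : Prop :=
  Even ((G.edgeFinset.filter fun e => f e = true).card)

/-- Variables of the XOR system `φ(G,f,g)`: `(false, v, u)` is `x_{(v,u)}` and
`(true, v, u)` is `y_{(v,u)}`, for each directed edge `(v,u)`. -/
abbrev XVar (V : Type*) := Bool × V × V

/-- The XOR constraint system `φ(G,f,g)`: a constraint is a pair (set of variables,
right-hand side). For each vertex `v` and neighbor `u`: `x_{(v,u)} ⊕ y_{(v,u)} = 0`;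
for each vertex `v`: `⊕_{u ∈ Γ(v)} y_{(v,u)} = 0`; for each edge `(u,v)`:
`x_{(u,v)} ⊕ x_{(v,u)} = f((u,v)) ⊕ g((u,v))`. -/
def phiSystem {V : Type*} [Fintype V] [DecidableEq V] (G : SimpleGraph V)
    [DecidableRel G.Adj] (f g : Sym2 V → Bool) : Set (Finset (XVar V) × Bool) :=
  {c | (∃ v u, G.Adj v u ∧ c = ({(false, v, u), (true, v, u)}, false))
    ∨ (∃ v : V, c = ((G.neighborFinset v).image (fun u => (true, v, u)), false))
    ∨ (∃ v u, G.Adj v u ∧ c = ({(false, v, u), (false, u, v)}, f s(v, u) ^^ g s(v, u)))}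

section crusadewidth
set_option linter.unusedSectionVars false

variable {V : Type*} [Fintype V] [DecidableEq V] (G : SimpleGraph V) [DecidableRel G.Adj]

def fcut (A : Finset V) : ℕ :=
  ((Finset.univ ×ˢ Finset.univ).filter fun p : V × V => p.1 ∈ A ∧ p.2 ∉ A ∧ G.Adj p.1 p.2).card

lemma cutCount_eq_fcut (A : Finset V) : cutCount G (↑A) = fcut G A := by
  have : {p : V × V | p.1 ∈ (↑A : Set V) ∧ p.2 ∉ (↑A : Set V) ∧ G.Adj p.1 p.2}
      = ↑((Finset.univ ×ˢ Finset.univ).filter fun p : V × V => p.1 ∈ A ∧ p.2 ∉ A ∧ G.Adj p.1 p.2) := by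
    ext p; simp
  rw [cutCount, this, Set.ncard_coe_finset, fcut]

lemma fcut_submodular (A B : Finset V) :
    fcut G (A ∩ B) + fcut G (A ∪ B) ≤ fcut G A + fcut G B := by
  classical
  simp only [fcut, Finset.card_filter]
  rw [← Finset.sum_add_distrib, ← Finset.sum_add_distrib]
  apply Finset.sum_le_sum
  intro p _
  by_cases ha : p.1 ∈ A <;> by_cases hb : p.1 ∈ B <;> by_cases hc : p.2 ∈ A <;>
    by_cases hd : p.2 ∈ B <;> by_cases he : G.Adj p.1 p.2 <;>
    simp [ha, hb, hc, hd, he]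

section crusade

variable (r t : ℕ)

def Crusade (X : ℕ → Finset V) : Prop :=
  X 0 = ∅ ∧ X t = Finset.univ ∧ (∀ i < t, (X (i+1) \ X i).card ≤ 1) ∧ (∀ i ≤ t, fcut G (X i) ≤ r)

noncomputable def cmeas (X : ℕ → Finset V) : ℕ :=
  (∑ i ∈ Finset.range (t+1), fcut G (X i)) * (Fintype.card V * (t+1) + 1)
  + ∑ i ∈ Finset.range (t+1), (X i).card

lemma sum_ite_point (F : Finset V → ℕ) (X : ℕ → Finset V) {i : ℕ}
    (hi : i ∈ Finset.range (t+1)) (A' : Finset V) :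
    ∑ j ∈ Finset.range (t+1), F (if j = i then A' else X j) + F (X i)
      = ∑ j ∈ Finset.range (t+1), F (X j) + F A' := by
  have h1 : ∑ j ∈ Finset.range (t+1), F (if j = i then A' else X j)
      = F A' + ∑ j ∈ (Finset.range (t+1)).erase i, F (X j) := by
    rw [← Finset.add_sum_erase _ (fun j => F (if j = i then A' else X j)) hi]
    simp only [if_pos rfl]
    congr 1
    exact Finset.sum_congr rfl fun j hj => by rw [if_neg (Finset.ne_of_mem_erase hj)]
  have h2 : ∑ j ∈ Finset.range (t+1), F (X j)
      = F (X i) + ∑ j ∈ (Finset.range (t+1)).erase i, F (X j) := by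
    rw [← Finset.add_sum_erase _ (fun j => F (X j)) hi]
  omega

lemma exists_progressive :
    ∀ N (X : ℕ → Finset V), cmeas G t X ≤ N → Crusade G r t X →
    ∃ X', Crusade G r t X' ∧ ∀ i < t, X' i ⊆ X' (i+1) := by
  intro N
  induction N with
  | zero =>
      intro X hm hc
      by_cases hmono : ∀ i < t, X i ⊆ X (i+1)
      · exact ⟨X, hc, hmono⟩
      · exfalso
        push_neg at hmono
        obtain ⟨i, hit, hns⟩ := hmono
        have hXi : (X i).card ≠ 0 := by
          intro h0
          exact hns (by simp [Finset.card_eq_zero.mp h0])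
        have hle : (X i).card ≤ ∑ j ∈ Finset.range (t+1), (X j).card :=
          Finset.single_le_sum (f := fun j => (X j).card) (fun _ _ => Nat.zero_le _)
            (Finset.mem_range.mpr (by omega))
        have hm' := hm
        unfold cmeas at hm'
        omega
  | succ N ih =>
      intro X hm hc
      by_cases hmono : ∀ i < t, X i ⊆ X (i+1)
      · exact ⟨X, hc, hmono⟩
      push_neg at hmono
      obtain ⟨i, hit, hns⟩ := hmono
      obtain ⟨h0, hT, hstep, hcut⟩ := hc
      have hi0 : i ≠ 0 := by
        intro h; apply hns; rw [h, h0]; exact Finset.empty_subset _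
      have hiR : i ∈ Finset.range (t+1) := Finset.mem_range.mpr (by omega)
      have hi1R : i + 1 ∈ Finset.range (t+1) := Finset.mem_range.mpr (by omega)
      by_cases hcase : fcut G (X i ∩ X (i+1)) ≤ fcut G (X i)
      · -- replace X i by X i ∩ X (i+1)
        set Y : ℕ → Finset V := fun j => if j = i then X i ∩ X (i+1) else X j with hYdef
        have hY : ∀ j, Y j = if j = i then X i ∩ X (i+1) else X j := fun j => rfl
        refine ih Y ?_ ?_
        · have e1 := sum_ite_point t (fcut G) X hiR (X i ∩ X (i+1))
          have e2 := sum_ite_point t Finset.card X hiR (X i ∩ X (i+1))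
          have hss : X i ∩ X (i+1) ⊂ X i := by
            refine Finset.ssubset_iff_subset_ne.mpr ⟨Finset.inter_subset_left, ?_⟩
            intro h; exact hns (h ▸ Finset.inter_subset_right)
          have hclt : (X i ∩ X (i+1)).card < (X i).card := Finset.card_lt_card hss
          have hm' := hm
          unfold cmeas at hm' ⊢
          simp only [hY]
          have h3 : ∑ j ∈ Finset.range (t+1), fcut G (if j = i then X i ∩ X (i+1) else X j)
              ≤ ∑ j ∈ Finset.range (t+1), fcut G (X j) := by omega
          have h5 := Nat.mul_le_mul_right (Fintype.card V * (t+1) + 1) h3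
          omega
        · refine ⟨by rw [hY 0, if_neg (Ne.symm hi0)]; exact h0,
            by rw [hY t, if_neg (by omega : t ≠ i)]; exact hT, ?_, ?_⟩
          · intro j hj
            rw [hY j, hY (j+1)]
            rcases eq_or_ne j i with rfl | hji
            · rw [if_pos rfl, if_neg (by omega : j + 1 ≠ j)]
              have heq : X (j+1) \ (X j ∩ X (j+1)) = X (j+1) \ X j := by
                ext x; simp
              rw [heq]; exact hstep j hj
            · rw [if_neg hji]
              rcases eq_or_ne (j+1) i with hj1 | hj1
              · rw [if_pos hj1]
                calc ((X i ∩ X (i+1)) \ X j).card ≤ (X i \ X j).card :=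
                      Finset.card_le_card (Finset.sdiff_subset_sdiff Finset.inter_subset_left le_rfl)
                  _ ≤ 1 := by rw [← hj1]; exact hstep j hj
              · rw [if_neg hj1]; exact hstep j hj
          · intro j hj
            rw [hY j]
            rcases eq_or_ne j i with rfl | hji
            · rw [if_pos rfl]; exact le_trans hcase (hcut j hj)
            · rw [if_neg hji]; exact hcut j hj
      · -- replace X (i+1) by X i ∪ X (i+1)
        push_neg at hcase
        have hub : fcut G (X i ∪ X (i+1)) < fcut G (X (i+1)) := by
          have := fcut_submodular G (X i) (X (i+1))
          omega
        set Y : ℕ → Finset V := fun j => if j = i + 1 then X i ∪ X (i+1) else X j with hYdef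
        have hY : ∀ j, Y j = if j = i + 1 then X i ∪ X (i+1) else X j := fun j => rfl
        refine ih Y ?_ ?_
        · have e1 := sum_ite_point t (fcut G) X hi1R (X i ∪ X (i+1))
          have e2 := sum_ite_point t Finset.card X hi1R (X i ∪ X (i+1))
          have hm' := hm
          unfold cmeas at hm' ⊢
          simp only [hY]
          have h3 : ∑ j ∈ Finset.range (t+1), fcut G (if j = i+1 then X i ∪ X (i+1) else X j) + 1
              ≤ ∑ j ∈ Finset.range (t+1), fcut G (X j) := by omega
          have hcard : (X i ∪ X (i+1)).card ≤ Fintype.card V := Finset.card_le_univ _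
          have h5 : (∑ j ∈ Finset.range (t+1), fcut G (if j = i+1 then X i ∪ X (i+1) else X j))
                * (Fintype.card V * (t+1) + 1) + (Fintype.card V * (t+1) + 1)
              ≤ (∑ j ∈ Finset.range (t+1), fcut G (X j)) * (Fintype.card V * (t+1) + 1) := by
            have h6 := Nat.mul_le_mul_right (Fintype.card V * (t+1) + 1) h3
            rw [Nat.succ_mul] at h6
            exact h6
          have hn1 : Fintype.card V ≤ Fintype.card V * (t+1) := by nlinarith
          omega
        · refine ⟨by rw [hY 0, if_neg (by omega : (0:ℕ) ≠ i + 1)]; exact h0, ?_, ?_, ?_⟩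
          · rw [hY t]
            rcases eq_or_ne t (i+1) with ht1 | htne
            · rw [if_pos ht1, ← ht1, hT]
              exact Finset.union_eq_right.mpr (Finset.subset_univ _)
            · rw [if_neg htne]; exact hT
          · intro j hj
            rw [hY j, hY (j+1)]
            rcases eq_or_ne (j+1) (i+1) with hj1 | hj1
            · have hji : j = i := by omega
              subst hji
              rw [if_pos rfl, if_neg (by omega : j ≠ j + 1)]
              have heq : (X j ∪ X (j+1)) \ X j = X (j+1) \ X j := by
                ext x; simp; tauto
              rw [heq]; exact hstep j hj
            · rw [if_neg hj1]
              rcases eq_or_ne j (i+1) with hji | hji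
              · rw [if_pos hji]
                calc (X (j+1) \ (X i ∪ X (i+1))).card ≤ (X (j+1) \ X (i+1)).card :=
                      Finset.card_le_card (Finset.sdiff_subset_sdiff le_rfl Finset.subset_union_right)
                  _ ≤ 1 := by rw [← hji]; exact hstep j hj
              · rw [if_neg hji]; exact hstep j hj
          · intro j hj
            rw [hY j]
            rcases eq_or_ne j (i+1) with rfl | hji
            · rw [if_pos rfl]; exact le_trans (le_of_lt hub) (hcut _ hj)
            · rw [if_neg hji]; exact hcut j hj

lemma crusade_cutwidth {r t : ℕ} (X : ℕ → Finset V) (hc : Crusade G r t X) :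
    cutwidth G ≤ r := by
  classical
  obtain ⟨X, ⟨h0, hT, hstep, hcut⟩, hmono⟩ := exists_progressive G r t (cmeas G t X) X le_rfl hc
  have hm2 : ∀ i j, i ≤ j → j ≤ t → X i ⊆ X j := by
    intro i j hij hjt
    induction j with
    | zero =>
        have : i = 0 := by omega
        subst this; exact Finset.Subset.refl _
    | succ j ihj =>
        rcases eq_or_ne i (j+1) with rfl | hne
        · exact Finset.Subset.refl _
        · exact subset_trans (ihj (by omega) (by omega)) (hmono j (by omega))
  have hcard1 : ∀ i < t, (X (i+1)).card ≤ (X i).card + 1 := by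
    intro i hi
    have hsub := hmono i hi
    have h1 := Finset.card_sdiff_of_subset hsub
    have h2 := Finset.card_le_card hsub
    have h3 := hstep i hi
    omega
  set n := Fintype.card V with hn
  have hex : ∀ k : ℕ, ∃ i, i ≤ t ∧ (X i).card = min k n := by
    intro k
    rcases Nat.eq_zero_or_pos (min k n) with hk0 | hkpos
    · exact ⟨0, Nat.zero_le _, by rw [h0, hk0]; simp⟩
    · have hPt : min k n ≤ (X t).card := by
        rw [hT, Finset.card_univ, ← hn]; exact min_le_right _ _
      have hne : ∃ j, min k n ≤ (X j).card := ⟨t, hPt⟩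
      have hspec : min k n ≤ (X (Nat.find hne)).card := Nat.find_spec hne
      have hjt : Nat.find hne ≤ t := Nat.find_min' hne hPt
      have hj0 : Nat.find hne ≠ 0 := by
        intro h
        rw [h, h0] at hspec
        simp at hspec
        omega
      have hmin : ¬ min k n ≤ (X (Nat.find hne - 1)).card := Nat.find_min hne (by omega)
      have hml : Nat.find hne - 1 < t := by omega
      have hc1 := hcard1 (Nat.find hne - 1) hml
      rw [show Nat.find hne - 1 + 1 = Nat.find hne by omega] at hc1
      exact ⟨Nat.find hne, hjt, by omega⟩
  choose I hIt hIc using hex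
  have hYmono : ∀ k l, k ≤ l → l ≤ n → X (I k) ⊆ X (I l) := by
    intro k l hkl hln
    rcases eq_or_lt_of_le hkl with rfl | hlt
    · exact Finset.Subset.refl _
    · have hck := hIc k
      have hcl := hIc l
      rcases le_or_gt (I k) (I l) with h | h
      · exact hm2 _ _ h (hIt l)
      · exfalso
        have := Finset.card_le_card (hm2 _ _ (le_of_lt h) (hIt k))
        omega
  have hsing : ∀ k : Fin n, ∃ a : V, X (I ((k:ℕ)+1)) \ X (I (k:ℕ)) = {a} := by
    intro k
    have hk1 : (k:ℕ) + 1 ≤ n := k.2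
    have hck := hIc (k:ℕ)
    have hcl := hIc ((k:ℕ)+1)
    have hsub : X (I (k:ℕ)) ⊆ X (I ((k:ℕ)+1)) := hYmono _ _ (by omega) hk1
    have hd := Finset.card_sdiff_of_subset hsub
    exact Finset.card_eq_one.mp (by omega)
  choose π₀ hπ₀ using hsing
  have hmem : ∀ k : Fin n, π₀ k ∈ X (I ((k:ℕ)+1)) ∧ π₀ k ∉ X (I (k:ℕ)) := by
    intro k
    have h1 : π₀ k ∈ X (I ((k:ℕ)+1)) \ X (I (k:ℕ)) := by
      rw [hπ₀ k]; exact Finset.mem_singleton_self _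
    exact ⟨(Finset.mem_sdiff.mp h1).1, (Finset.mem_sdiff.mp h1).2⟩
  have key : ∀ k l : Fin n, (k:ℕ) < (l:ℕ) → π₀ k ≠ π₀ l := by
    intro k l hkl heq
    have h1 : π₀ k ∈ X (I ((k:ℕ)+1)) := (hmem k).1
    have h2 : π₀ k ∈ X (I (l:ℕ)) := hYmono ((k:ℕ)+1) l (by omega) (le_of_lt l.2) h1
    rw [heq] at h2
    exact (hmem l).2 h2
  have hinj : Function.Injective π₀ := by
    intro k l hkl
    rcases lt_trichotomy (k:ℕ) (l:ℕ) with h | h | h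
    · exact absurd hkl (key k l h)
    · exact Fin.ext h
    · exact absurd hkl.symm (key l k h)
  have hbij : Function.Bijective π₀ :=
    (Fintype.bijective_iff_injective_and_card π₀).mpr ⟨hinj, by simp [hn]⟩
  refine Nat.sInf_le ⟨Equiv.ofBijective π₀ hbij, ?_⟩
  intro i
  have himg : (Equiv.ofBijective π₀ hbij) '' {j | j ≤ i} = ↑(X (I ((i:ℕ)+1))) := by
    ext v
    constructor
    · rintro ⟨j, hj, rfl⟩
      simp only [Equiv.ofBijective_apply]
      have h1 : π₀ j ∈ X (I ((j:ℕ)+1)) := (hmem j).1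
      have hji : (j:ℕ) ≤ (i:ℕ) := hj
      exact hYmono ((j:ℕ)+1) ((i:ℕ)+1) (by omega) i.2 h1
    · intro hv
      have hv' : v ∈ X (I ((i:ℕ)+1)) := hv
      have hQ : ∃ k : ℕ, v ∈ X (I (k+1)) := ⟨i, hv'⟩
      have hkspec : v ∈ X (I (Nat.find hQ + 1)) := Nat.find_spec hQ
      have hki : Nat.find hQ ≤ (i:ℕ) := Nat.find_min' hQ hv'
      have hkn : Nat.find hQ < n := by have := i.2; omega
      have hnotin : v ∉ X (I (Nat.find hQ)) := by
        rcases Nat.eq_zero_or_pos (Nat.find hQ) with hk0 | hkpos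
        · rw [hk0]
          intro hvin
          have hc0 := hIc 0
          simp at hc0
          rw [hc0] at hvin
          exact Finset.notMem_empty v hvin
        · have hmin : ¬ v ∈ X (I ((Nat.find hQ - 1) + 1)) := Nat.find_min hQ (by omega)
          rw [show Nat.find hQ - 1 + 1 = Nat.find hQ by omega] at hmin
          exact hmin
      have hin : v ∈ X (I (Nat.find hQ + 1)) \ X (I (Nat.find hQ)) :=
        Finset.mem_sdiff.mpr ⟨hkspec, hnotin⟩
      have hs := hπ₀ ⟨Nat.find hQ, hkn⟩
      simp only [Fin.val_mk] at hs
      rw [hs] at hin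
      have hvk : v = π₀ ⟨Nat.find hQ, hkn⟩ := Finset.mem_singleton.mp hin
      exact ⟨⟨Nat.find hQ, hkn⟩, by change Nat.find hQ ≤ (i : ℕ); exact hki, hvk.symm⟩
  rw [himg, cutCount_eq_fcut]
  exact hcut _ (hIt _)

end crusade
end crusadewidth

section axioms
set_option linter.unusedSectionVars false

variable {V : Type*} [Fintype V] [DecidableEq V]

def linkAx (v u : V) : Finset (XVar V) × Bool := ({(false, v, u), (true, v, u)}, false)

def parAx (G : SimpleGraph V) [DecidableRel G.Adj] (v : V) : Finset (XVar V) × Bool :=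
  ((G.neighborFinset v).image (fun u => (true, v, u)), false)

def edgAx (f g : Sym2 V → Bool) (v u : V) : Finset (XVar V) × Bool :=
  ({(false, v, u), (false, u, v)}, f s(v, u) ^^ g s(v, u))

lemma edgAx_comm (f g : Sym2 V → Bool) (v u : V) : edgAx f g v u = edgAx f g u v := by
  unfold edgAx
  refine Prod.ext ?_ ?_
  · simp only []
    exact Finset.pair_comm _ _
  · simp only []
    rw [Sym2.eq_swap]

variable (G : SimpleGraph V) [DecidableRel G.Adj] (f g : Sym2 V → Bool)

lemma phi_cases {a : Finset (XVar V) × Bool} (ha : a ∈ phiSystem G f g) :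
    (∃ v u, G.Adj v u ∧ a = linkAx v u) ∨ (∃ v, a = parAx G v)
      ∨ (∃ v u, G.Adj v u ∧ a = edgAx f g v u) := ha

lemma mem_parAx_fst {v : V} {z : XVar V} :
    z ∈ (parAx G v).1 ↔ z.1 = true ∧ z.2.1 = v ∧ G.Adj v z.2.2 := by
  unfold parAx
  constructor
  · intro hz
    simp only [Finset.mem_image, SimpleGraph.mem_neighborFinset] at hz
    obtain ⟨u, hu, rfl⟩ := hz
    exact ⟨rfl, rfl, hu⟩
  · rintro ⟨h1, h2, h3⟩
    simp only [Finset.mem_image, SimpleGraph.mem_neighborFinset]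
    refine ⟨z.2.2, h2 ▸ h3, ?_⟩
    rw [← h1, ← h2]

lemma link_ne_par (v u w : V) : linkAx v u ≠ parAx G w := by
  intro h
  have : ((false : Bool), v, u) ∈ (linkAx v u).1 := by simp [linkAx]
  rw [h, mem_parAx_fst] at this
  simp at this

lemma link_ne_edg (v u v' u' : V) : linkAx v u ≠ edgAx f g v' u' := by
  intro h
  have : ((true : Bool), v, u) ∈ (linkAx v u).1 := by simp [linkAx]
  rw [h] at this
  simp [edgAx] at this

lemma par_ne_edg (w v' u' : V) : parAx G w ≠ edgAx f g v' u' := by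
  intro h
  have : ((false : Bool), v', u') ∈ (edgAx f g v' u').1 := by simp [edgAx]
  rw [← h, mem_parAx_fst] at this
  simp at this

lemma linkAx_inj {v u v' u' : V} (h : linkAx v u = linkAx (V := V) v' u') : v = v' ∧ u = u' := by
  have : ((true : Bool), v, u) ∈ (linkAx v u).1 := by simp [linkAx]
  rw [h] at this
  simp [linkAx, Prod.ext_iff] at this
  tauto

lemma parAx_inj {v w : V} (hv : 0 < G.degree v) (h : parAx G v = parAx G w) : v = w := by
  obtain ⟨u, hu⟩ := Finset.card_pos.mp
    (by rwa [SimpleGraph.card_neighborFinset_eq_degree] : 0 < (G.neighborFinset v).card)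
  have : ((true : Bool), v, u) ∈ (parAx G v).1 := by
    rw [mem_parAx_fst]
    exact ⟨rfl, rfl, (SimpleGraph.mem_neighborFinset G v u).mp hu⟩
  rw [h, mem_parAx_fst] at this
  exact this.2.1

lemma true_mem_char {v u : V} (hadj : G.Adj v u) {a : Finset (XVar V) × Bool}
    (ha : a ∈ phiSystem G f g) :
    ((true, v, u) ∈ a.1 ↔ (a = linkAx v u ∨ a = parAx G v)) := by
  rcases phi_cases G f g ha with ⟨v', u', hadj', rfl⟩ | ⟨v', rfl⟩ | ⟨v', u', hadj', rfl⟩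
  · constructor
    · intro hz
      simp [linkAx, Prod.ext_iff] at hz
      left; rw [hz.1, hz.2]
    · rintro (h | h)
      · obtain ⟨rfl, rfl⟩ := linkAx_inj h
        simp [linkAx]
      · exact absurd h (link_ne_par G v' u' v)
  · rw [mem_parAx_fst]
    constructor
    · rintro ⟨-, h2, h3⟩
      right
      simp only at h2 h3
      rw [h2]
    · rintro (h | h)
      · exact absurd h.symm (link_ne_par G v u v')
      · have hmem : ((true : Bool), v, u) ∈ (parAx G v).1 :=
          (mem_parAx_fst G).mpr ⟨rfl, rfl, hadj⟩
        rw [← h] at hmem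
        exact (mem_parAx_fst G).mp hmem
  · constructor
    · intro hz
      simp [edgAx, Prod.ext_iff] at hz
    · rintro (h | h)
      · exact absurd h.symm (link_ne_edg f g v u v' u')
      · exact absurd h.symm (par_ne_edg G f g v v' u')

lemma false_mem_char {v u : V} (hadj : G.Adj v u) {a : Finset (XVar V) × Bool}
    (ha : a ∈ phiSystem G f g) :
    ((false, v, u) ∈ a.1 ↔ (a = linkAx v u ∨ a = edgAx f g v u)) := by
  rcases phi_cases G f g ha with ⟨v', u', hadj', rfl⟩ | ⟨v', rfl⟩ | ⟨v', u', hadj', rfl⟩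
  · constructor
    · intro hz
      simp [linkAx, Prod.ext_iff] at hz
      left; rw [hz.1, hz.2]
    · rintro (h | h)
      · obtain ⟨rfl, rfl⟩ := linkAx_inj h
        simp [linkAx]
      · exact absurd h (link_ne_edg f g v' u' v u)
  · constructor
    · intro hz
      rw [mem_parAx_fst] at hz
      simp at hz
    · rintro (h | h)
      · exact absurd h.symm (link_ne_par G v u v')
      · exact absurd h (par_ne_edg G f g v' v u)
  · constructor
    · intro hz
      simp only [edgAx, Finset.mem_insert, Finset.mem_singleton, Prod.ext_iff] at hz
      rcases hz with ⟨-, h1, h2⟩ | ⟨-, h1, h2⟩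
      · right
        rw [h1, h2]
      · right
        rw [h1, h2, edgAx_comm]
    · rintro (h | h)
      · exact absurd h.symm (link_ne_edg f g v u v' u')
      · rw [h]
        simp [edgAx]

end axioms

section counting
set_option linter.unusedSectionVars false
variable {V : Type*} [DecidableEq V] (c : ℕ → Finset (XVar V) × Bool)

noncomputable def cnt (a : Finset (XVar V) × Bool) (i : ℕ) : ℕ :=
  ((Finset.range i).filter (fun j => c j = a)).card

lemma count_succ (p : ℕ → Prop) [DecidablePred p] (i : ℕ) :
    ((Finset.range (i+1)).filter p).card
      = ((Finset.range i).filter p).card + if p i then 1 else 0 := by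
  rw [Finset.range_add_one, Finset.filter_insert]
  by_cases h : p i
  · rw [if_pos h, if_pos h,
      Finset.card_insert_of_notMem (fun hm => Finset.notMem_range_self (Finset.mem_filter.mp hm).1)]
  · rw [if_neg h, if_neg h, Nat.add_zero]

lemma cnt_succ (a : Finset (XVar V) × Bool) (i : ℕ) :
    cnt c a (i+1) = cnt c a i + if c i = a then 1 else 0 := by
  classical
  unfold cnt
  exact count_succ _ i

lemma split_count {i : ℕ} {z : XVar V} {a₁ a₂ : Finset (XVar V) × Bool} (hne : a₁ ≠ a₂)
    (hc : ∀ j < i, (z ∈ (c j).1 ↔ c j = a₁ ∨ c j = a₂)) :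
    ((Finset.range i).filter (fun j => z ∈ (c j).1)).card = cnt c a₁ i + cnt c a₂ i := by
  classical
  have heq : (Finset.range i).filter (fun j => z ∈ (c j).1)
      = ((Finset.range i).filter (fun j => c j = a₁)) ∪ ((Finset.range i).filter (fun j => c j = a₂)) := by
    rw [← Finset.filter_or]
    exact Finset.filter_congr (fun j hj => by
      rw [hc j (Finset.mem_range.mp hj)])
  rw [heq, Finset.card_union_of_disjoint]
  · rfl
  · rw [Finset.disjoint_left]
    intro j hj1 hj2
    exact hne (((Finset.mem_filter.mp hj1).2).symm.trans (Finset.mem_filter.mp hj2).2)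

end counting


/-- `XorDerives Φ w S T sgn`: from the XOR constraint `⊕S = 0` one can derive
`⊕T = sgn` by a sequence of steps each XORing in a constraint of `Φ`, with every
intermediate constraint containing at most `w` variables. -/
def XorDerives {V : Type*} [DecidableEq V] (Φ : Set (Finset (XVar V) × Bool))
    (w : ℕ) (S T : Finset (XVar V)) (sgn : Bool) : Prop :=
  ∃ (t : ℕ) (Seq : ℕ → Finset (XVar V)) (c : ℕ → Finset (XVar V) × Bool),
    Seq 0 = S ∧ Seq t = T ∧
    (∀ i < t, c i ∈ Φ ∧ Seq (i + 1) = symmDiff (Seq i) (c i).1) ∧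
    (∀ i ≤ t, (Seq i).card ≤ w) ∧
    sgn = decide (Odd (((Finset.range t).filter fun i => (c i).2 = true).card))

/-- A width-`w` resolution refutation of `Φ`: a derivation of `⊕∅ = 1` from `⊕∅ = 0`. -/
def XorRefutable {V : Type*} [DecidableEq V] (Φ : Set (Finset (XVar V) × Bool))
    (w : ℕ) : Prop :=
  XorDerives Φ w ∅ ∅ true

/-- If `G` is connected, 3-regular, with cutwidth `r+1`, and `f, g` have different
parity, then `φ(G,f,g)` cannot be refuted by width-`r` resolution. -/
theorem phi_no_small_width_refutation {V : Type*} [Fintype V] [DecidableEq V]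
    (G : SimpleGraph V) [DecidableRel G.Adj]
    (hconn : G.Connected) (hreg : ∀ v, G.degree v = 3)
    (r : ℕ) (hcw : cutwidth G = r + 1)
    (f g : Sym2 V → Bool) (hpar : ¬ (EvenParity G f ↔ EvenParity G g)) :
    ¬ XorRefutable (phiSystem G f g) r := by
  classical
  intro href
  obtain ⟨t, Seq, c, hS0, hSt, hstep, hw, hsgn⟩ := href
  have hdeg : ∀ w : V, 0 < G.degree w := fun w => by rw [hreg w]; norm_num
  have hPhi : ∀ j < t, c j ∈ phiSystem G f g := fun j hj => (hstep j hj).1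
  have hmem : ∀ i ≤ t, ∀ z : XVar V,
      (z ∈ Seq i ↔ Odd (((Finset.range i).filter (fun j => z ∈ (c j).1)).card)) := by
    intro i
    induction i with
    | zero => intro _ z; rw [hS0]; simp
    | succ i ih =>
        intro hit z
        have hi : i < t := by omega
        rw [(hstep i hi).2, Finset.mem_symmDiff, ih (by omega) z,
          count_succ (fun j => z ∈ (c j).1) i]
        by_cases hz : z ∈ (c i).1
        · rw [if_pos hz]
          constructor
          · rintro (⟨-, hno⟩ | ⟨-, h⟩)
            · exact absurd hz hno
            · rw [Nat.odd_iff] at h ⊢; omega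
          · intro h
            refine Or.inr ⟨hz, ?_⟩
            rw [Nat.odd_iff] at h ⊢; omega
        · rw [if_neg hz, Nat.add_zero]
          constructor
          · rintro (⟨h, -⟩ | ⟨hc, -⟩)
            · exact h
            · exact absurd hc hz
          · intro h; exact Or.inl ⟨h, hz⟩
  have hT1 : ∀ i ≤ t, ∀ v u : V, G.Adj v u →
      ((true, v, u) ∈ Seq i ↔ Odd (cnt c (linkAx v u) i + cnt c (parAx G v) i)) := by
    intro i hit v u hadj
    rw [hmem i hit _, split_count c (link_ne_par G v u v)
      (fun j hj => true_mem_char G f g hadj (hPhi j (lt_of_lt_of_le hj hit)))]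
  have hF1 : ∀ i ≤ t, ∀ v u : V, G.Adj v u →
      ((false, v, u) ∈ Seq i ↔ Odd (cnt c (linkAx v u) i + cnt c (edgAx f g v u) i)) := by
    intro i hit v u hadj
    rw [hmem i hit _, split_count c (link_ne_edg f g v u v u)
      (fun j hj => false_mem_char G f g hadj (hPhi j (lt_of_lt_of_le hj hit)))]
  set W : ℕ → Finset V := fun i => Finset.univ.filter (fun v => Odd (cnt c (parAx G v) i))
    with hWdef
  have hWmem : ∀ i (v : V), v ∈ W i ↔ Odd (cnt c (parAx G v) i) := by
    intro i v; simp [hWdef]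
  have hcutb : ∀ i ≤ t, fcut G (W i) ≤ r := by
    intro i hit
    refine le_trans ?_ (hw i hit)
    unfold fcut
    set pick : V × V → XVar V := fun p =>
      if (true, p.1, p.2) ∈ Seq i then (true, p.1, p.2)
      else if (false, p.1, p.2) ∈ Seq i then (false, p.1, p.2)
      else if (true, p.2, p.1) ∈ Seq i then (true, p.2, p.1)
      else (false, p.2, p.1) with hpickdef
    have hpick : ∀ p : V × V, pick p =
        if (true, p.1, p.2) ∈ Seq i then (true, p.1, p.2)
        else if (false, p.1, p.2) ∈ Seq i then (false, p.1, p.2)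
        else if (true, p.2, p.1) ∈ Seq i then (true, p.2, p.1)
        else (false, p.2, p.1) := fun p => rfl
    apply Finset.card_le_card_of_injOn pick
    · intro p hp
      rw [Finset.mem_coe, Finset.mem_filter] at hp
      obtain ⟨-, h1, h2, h3⟩ := hp
      rw [hWmem i p.1] at h1
      rw [hWmem i p.2] at h2
      by_cases c1 : (true, p.1, p.2) ∈ Seq i
      · rw [hpick p, if_pos c1]; exact c1
      by_cases c2 : (false, p.1, p.2) ∈ Seq i
      · rw [hpick p, if_neg c1, if_pos c2]; exact c2
      by_cases c3 : (true, p.2, p.1) ∈ Seq i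
      · rw [hpick p, if_neg c1, if_neg c2, if_pos c3]; exact c3
      · rw [hpick p, if_neg c1, if_neg c2, if_neg c3]
        rw [Finset.mem_coe, hF1 i hit p.2 p.1 h3.symm]
        rw [hT1 i hit p.1 p.2 h3] at c1
        rw [hF1 i hit p.1 p.2 h3] at c2
        rw [hT1 i hit p.2 p.1 h3.symm] at c3
        rw [edgAx_comm f g p.2 p.1]
        simp only [Nat.odd_iff] at h1 h2 c1 c2 c3 ⊢
        omega
    · intro p hp q hq hpq
      have hps : ∀ x : V × V, (pick x).2 = (x.1, x.2) ∨ (pick x).2 = (x.2, x.1) := by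
        intro x
        rw [hpick x]
        split_ifs <;> simp
      have h1 := (Finset.mem_filter.mp (Finset.mem_coe.mp hp)).2
      have h2 := (Finset.mem_filter.mp (Finset.mem_coe.mp hq)).2
      have e := congrArg Prod.snd hpq
      rcases hps p with e1 | e1 <;> rcases hps q with e2 | e2 <;>
        rw [e1, e2, Prod.mk.injEq] at e <;> obtain ⟨ea, eb⟩ := e
      · exact Prod.ext_iff.mpr ⟨ea, eb⟩
      · exact absurd (ea ▸ h1.1) h2.2.1
      · exact absurd (eb ▸ h1.1) h2.2.1
      · exact Prod.ext_iff.mpr ⟨eb, ea⟩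
  have hstepW : ∀ i < t, (W (i+1) \ W i).card ≤ 1 := by
    intro i hi
    have hsub : ∀ v ∈ W (i+1) \ W i, c i = parAx G v := by
      intro v hv
      rw [Finset.mem_sdiff, hWmem (i+1) v, hWmem i v] at hv
      by_contra hne
      rw [cnt_succ, if_neg hne] at hv
      obtain ⟨hv1, hv2⟩ := hv
      rw [Nat.add_zero] at hv1
      exact hv2 hv1
    refine Finset.card_le_one.mpr ?_
    intro a ha b hb
    exact parAx_inj G (hdeg a) ((hsub a ha).symm.trans (hsub b hb))
  have hW0 : W 0 = ∅ := by
    ext v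
    rw [hWmem 0 v]
    simp [cnt]
  have hPadj : ∀ v u : V, G.Adj v u →
      (Odd (cnt c (parAx G v) t) ↔ Odd (cnt c (parAx G u) t)) := by
    intro v u hadj
    have e1 : ¬ ((true, v, u) ∈ Seq t) := by rw [hSt]; exact Finset.notMem_empty _
    have e2 : ¬ ((false, v, u) ∈ Seq t) := by rw [hSt]; exact Finset.notMem_empty _
    have e3 : ¬ ((true, u, v) ∈ Seq t) := by rw [hSt]; exact Finset.notMem_empty _
    have e4 : ¬ ((false, u, v) ∈ Seq t) := by rw [hSt]; exact Finset.notMem_empty _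
    rw [hT1 t le_rfl v u hadj] at e1
    rw [hF1 t le_rfl v u hadj] at e2
    rw [hT1 t le_rfl u v hadj.symm] at e3
    rw [hF1 t le_rfl u v hadj.symm] at e4
    rw [edgAx_comm f g u v] at e4
    simp only [Nat.odd_iff] at e1 e2 e3 e4 ⊢
    omega
  have hEP : ∀ v u : V, G.Adj v u →
      (Odd (cnt c (edgAx f g v u) t) ↔ Odd (cnt c (parAx G v) t)) := by
    intro v u hadj
    have e1 : ¬ ((true, v, u) ∈ Seq t) := by rw [hSt]; exact Finset.notMem_empty _
    have e2 : ¬ ((false, v, u) ∈ Seq t) := by rw [hSt]; exact Finset.notMem_empty _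
    rw [hT1 t le_rfl v u hadj] at e1
    rw [hF1 t le_rfl v u hadj] at e2
    simp only [Nat.odd_iff] at e1 e2 ⊢
    omega
  have hreach : ∀ v u : V, G.Reachable v u →
      (Odd (cnt c (parAx G v) t) ↔ Odd (cnt c (parAx G u) t)) := by
    intro v u h
    obtain ⟨w⟩ := h
    induction w with
    | nil => exact Iff.rfl
    | cons h p ih => exact (hPadj _ _ h).trans ih
  obtain ⟨v₀⟩ := hconn.nonempty
  by_cases hodd : Odd (cnt c (parAx G v₀) t)
  · have hWt : W t = Finset.univ := by
      ext v
      simp only [Finset.mem_univ, iff_true]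
      rw [hWmem t v]
      exact (hreach v v₀ (hconn.preconnected v v₀)).mpr hodd
    have hle : cutwidth G ≤ r :=
      crusade_cutwidth G W ⟨hW0, hWt, hstepW, hcutb⟩
    rw [hcw] at hle
    omega
  · have hallE : ∀ v : V, ¬ Odd (cnt c (parAx G v) t) := fun v h =>
      hodd ((hreach v v₀ (hconn.preconnected v v₀)).mp h)
    have hM : Odd (((Finset.range t).filter (fun i => (c i).2 = true)).card) :=
      of_decide_eq_true hsgn.symm
    set T := (Finset.range t).filter (fun i => (c i).2 = true) with hTdef
    have hfib : T.card = ∑ a ∈ T.image c, (T.filter (fun x => c x = a)).card :=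
      Finset.card_eq_sum_card_fiberwise (fun x hx => Finset.mem_image_of_mem c hx)
    have heven : ∀ a ∈ T.image c, 2 ∣ ((T.filter (fun x => c x = a)).card) := by
      intro a ha
      obtain ⟨j, hjT, rfl⟩ := Finset.mem_image.mp ha
      have hjt : j < t := Finset.mem_range.mp (Finset.mem_filter.mp hjT).1
      have hj2 : (c j).2 = true := (Finset.mem_filter.mp hjT).2
      rcases phi_cases G f g (hPhi j hjt) with ⟨v, u, hadj, hcj⟩ | ⟨v, hcj⟩ | ⟨v, u, hadj, hcj⟩
      · rw [hcj] at hj2; simp [linkAx] at hj2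
      · rw [hcj] at hj2; simp [parAx] at hj2
      · have hfe : T.filter (fun x => c x = c j) = (Finset.range t).filter (fun x => c x = c j) := by
          ext x
          simp only [hTdef, Finset.mem_filter, Finset.mem_range]
          constructor
          · rintro ⟨⟨hx, -⟩, he⟩; exact ⟨hx, he⟩
          · rintro ⟨hx, he⟩
            refine ⟨⟨hx, ?_⟩, he⟩
            rw [he, hj2]
        rw [hfe, hcj]
        have e1 : ¬ ((true, v, u) ∈ Seq t) := by rw [hSt]; exact Finset.notMem_empty _
        have e2 : ¬ ((false, v, u) ∈ Seq t) := by rw [hSt]; exact Finset.notMem_empty _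
        rw [hT1 t le_rfl v u hadj] at e1
        rw [hF1 t le_rfl v u hadj] at e2
        have e3 := hallE v
        have : ((Finset.range t).filter (fun x => c x = edgAx f g v u)).card
            = cnt c (edgAx f g v u) t := rfl
        rw [this]
        simp only [Nat.odd_iff] at e1 e2 e3
        omega
    have hdvd : 2 ∣ T.card := by
      rw [hfib]
      exact Finset.dvd_sum heven
    rw [Nat.odd_iff] at hM
    omega
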